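/- For each fixed y ∈ (0,∞), the function p ↦ sinh_p(y) is strictly log-convex on (0,∞); in particular, for p > 1 and y > 0, (sinh_p y)² < sinh_{p-1}(y)·sinh_{p+1}(y) when p - 1 > 0. -/

import Mathlib

open Real Set MeasureTheory intervalIntegral

noncomputable section SinhpAux

/-- The integrand of `arcsinh_p`. -/
def sinhpC (p t : ℝ) : ℝ := (1 + t ^ p) ^ (-(1 / p))

/-- `arcsinh_p`. -/
def sinhpA (p x : ℝ) : ℝ := ∫ t in (0:ℝ)..x, sinhpC p t

lemma sinhpC_pos {p t : ℝ} (hp : 0 < p) (ht : 0 ≤ t) : 0 < sinhpC p t := by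
  have h1 : (0:ℝ) < 1 + t ^ p := by
    have := Real.rpow_nonneg ht p
    linarith
  exact Real.rpow_pos_of_pos h1 _

lemma sinhpC_contOn {p : ℝ} (hp : 0 < p) : ContinuousOn (sinhpC p) (Ici 0) := by
  have h1 : ContinuousOn (fun t : ℝ => 1 + t ^ p) (Ici 0) :=
    continuousOn_const.add (continuousOn_id.rpow_const fun x _ => Or.inr hp.le)
  have h2 : ∀ t ∈ Ici (0:ℝ), (1 : ℝ) + t ^ p ≠ 0 ∨ (0:ℝ) ≤ -(1/p) := by
    intro t ht
    left
    have := Real.rpow_nonneg ht p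
    positivity
  exact h1.rpow_const h2

lemma sinhpC_contAt {p t : ℝ} (hp : 0 < p) (ht : 0 < t) : ContinuousAt (sinhpC p) t :=
  (sinhpC_contOn hp).continuousAt (Ici_mem_nhds ht)

lemma sinhpC_intble {p a b : ℝ} (hp : 0 < p) (ha : 0 ≤ a) (hb : 0 ≤ b) :
    IntervalIntegrable (sinhpC p) volume a b := by
  refine ((sinhpC_contOn hp).mono ?_).intervalIntegrable
  exact fun x hx => le_trans (le_inf ha hb) hx.1

lemma sinhpA_zero {p : ℝ} : sinhpA p 0 = 0 := integral_same

lemma sinhpA_nonneg {p x : ℝ} (hp : 0 < p) (hx : 0 ≤ x) : 0 ≤ sinhpA p x :=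
  intervalIntegral.integral_nonneg hx fun t ht => (sinhpC_pos hp ht.1).le

lemma sinhpA_strictMonoOn {p : ℝ} (hp : 0 < p) : StrictMonoOn (sinhpA p) (Ici 0) := by
  intro a ha b hb hab
  have key : sinhpA p a + ∫ t in a..b, sinhpC p t = sinhpA p b :=
    integral_add_adjacent_intervals (sinhpC_intble hp le_rfl ha) (sinhpC_intble hp ha hb)
  have hpos : 0 < ∫ t in a..b, sinhpC p t :=
    intervalIntegral_pos_of_pos_on (sinhpC_intble hp ha hb)
      (fun x hx => sinhpC_pos hp (le_of_lt (lt_of_le_of_lt ha hx.1))) hab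
  linarith

lemma sinhpA_contOn {p X : ℝ} (hp : 0 < p) (hX : 0 ≤ X) :
    ContinuousOn (sinhpA p) (Icc 0 X) := by
  have := intervalIntegral.continuousOn_primitive_interval' (μ := volume)
    (sinhpC_intble hp le_rfl hX) (left_mem_uIcc (a := (0:ℝ)) (b := X))
  rwa [uIcc_of_le hX] at this

lemma sinhpA_hasDeriv {p x : ℝ} (hp : 0 < p) (hx : 0 < x) :
    HasDerivAt (sinhpA p) (sinhpC p x) x := by
  refine integral_hasDerivAt_right (sinhpC_intble hp le_rfl hx.le) ?_ (sinhpC_contAt hp hx)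
  exact ContinuousOn.stronglyMeasurableAtFilter isOpen_Ioi
    ((sinhpC_contOn hp).mono Ioi_subset_Ici_self) x hx

lemma sinhpA_surj {p z : ℝ} (hp : 0 < p) (hz : 0 ≤ z) : ∃ x, 0 ≤ x ∧ sinhpA p x = z := by
  set X := Real.exp (z * 2 ^ (1/p)) with hXdef
  have hX1 : (1:ℝ) ≤ X :=
    Real.one_le_exp (mul_nonneg hz (Real.rpow_nonneg (by norm_num) _))
  have hX0 : (0:ℝ) ≤ X := le_trans zero_le_one hX1
  -- lower bound for the integrand on [1, X]
  have hlow : ∀ t ∈ Icc (1:ℝ) X, 2 ^ (-(1/p)) * t⁻¹ ≤ sinhpC p t := by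
    intro t ht
    have ht1 : (1:ℝ) ≤ t := ht.1
    have ht0 : (0:ℝ) < t := lt_of_lt_of_le one_pos ht1
    have htp1 : (1:ℝ) ≤ t ^ p := Real.one_le_rpow ht1 hp.le
    have htp0 : (0:ℝ) < t ^ p := lt_of_lt_of_le one_pos htp1
    have e1 : (2 * t ^ p) ^ (-(1/p)) = 2 ^ (-(1/p)) * t⁻¹ := by
      rw [Real.mul_rpow (by norm_num) htp0.le]
      congr 1
      rw [← Real.rpow_mul ht0.le, show p * -(1/p) = -1 by field_simp]
      exact Real.rpow_neg_one t
    have e2 : (2 * t ^ p) ^ (-(1/p)) ≤ (1 + t ^ p) ^ (-(1/p)) := by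
      apply Real.rpow_le_rpow_of_nonpos (by linarith) (by linarith)
      have : (0:ℝ) < 1/p := by positivity
      linarith
    calc 2 ^ (-(1/p)) * t⁻¹ = (2 * t ^ p) ^ (-(1/p)) := e1.symm
      _ ≤ (1 + t ^ p) ^ (-(1/p)) := e2
      _ = sinhpC p t := rfl
  have hlow_intble : IntervalIntegrable (fun t : ℝ => 2 ^ (-(1/p)) * t⁻¹) volume 1 X := by
    apply ContinuousOn.intervalIntegrable
    apply ContinuousOn.mul continuousOn_const
    apply ContinuousOn.inv₀ continuousOn_id
    intro x hx
    rw [uIcc_of_le hX1] at hx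
    exact ne_of_gt (lt_of_lt_of_le one_pos hx.1)
  have hint : ∫ t in (1:ℝ)..X, 2 ^ (-(1/p)) * t⁻¹ = 2 ^ (-(1/p)) * Real.log X := by
    rw [intervalIntegral.integral_const_mul, integral_inv]
    · rw [div_one]
    · rw [uIcc_of_le hX1]
      intro h
      exact absurd h.1 (by norm_num)
  have hmono : (∫ t in (1:ℝ)..X, 2 ^ (-(1/p)) * t⁻¹) ≤ ∫ t in (1:ℝ)..X, sinhpC p t :=
    intervalIntegral.integral_mono_on hX1 hlow_intble
      (sinhpC_intble hp zero_le_one hX0) hlow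
  have hlogX : 2 ^ (-(1/p)) * Real.log X = z := by
    rw [hXdef, Real.log_exp, ← mul_assoc, mul_comm ((2:ℝ) ^ (-(1/p))) z, mul_assoc,
      ← Real.rpow_add (by norm_num : (0:ℝ) < 2)]
    norm_num
  have hsplit : sinhpA p 1 + ∫ t in (1:ℝ)..X, sinhpC p t = sinhpA p X :=
    integral_add_adjacent_intervals (sinhpC_intble hp le_rfl zero_le_one)
      (sinhpC_intble hp zero_le_one hX0)
  have h01 : 0 ≤ sinhpA p 1 := sinhpA_nonneg hp zero_le_one
  have hzX : z ≤ sinhpA p X := by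
    have : z ≤ ∫ t in (1:ℝ)..X, sinhpC p t := by
      calc z = 2 ^ (-(1/p)) * Real.log X := hlogX.symm
        _ = ∫ t in (1:ℝ)..X, 2 ^ (-(1/p)) * t⁻¹ := hint.symm
        _ ≤ _ := hmono
    linarith
  have hIVT := intermediate_value_Icc hX0 (sinhpA_contOn hp hX0)
  have hz_mem : z ∈ Icc (sinhpA p 0) (sinhpA p X) := by
    rw [sinhpA_zero]; exact ⟨hz, hzX⟩
  obtain ⟨x, hx, hxz⟩ := hIVT hz_mem
  exact ⟨x, hx.1, hxz⟩

/-- The generalized sinh function (inverse of `sinhpA`). -/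
def sinhpS (p z : ℝ) : ℝ :=
  if h : 0 < p ∧ 0 ≤ z then (sinhpA_surj h.1 h.2).choose else 0

lemma sinhpS_spec {p z : ℝ} (hp : 0 < p) (hz : 0 ≤ z) :
    0 ≤ sinhpS p z ∧ sinhpA p (sinhpS p z) = z := by
  rw [sinhpS, dif_pos ⟨hp, hz⟩]
  exact (sinhpA_surj hp hz).choose_spec

lemma sinhpS_nonneg {p z : ℝ} (hp : 0 < p) (hz : 0 ≤ z) : 0 ≤ sinhpS p z :=
  (sinhpS_spec hp hz).1

lemma sinhpA_sinhpS {p z : ℝ} (hp : 0 < p) (hz : 0 ≤ z) : sinhpA p (sinhpS p z) = z :=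
  (sinhpS_spec hp hz).2

lemma sinhpS_pos {p z : ℝ} (hp : 0 < p) (hz : 0 < z) : 0 < sinhpS p z := by
  rcases eq_or_lt_of_le (sinhpS_nonneg hp hz.le) with h | h
  · exfalso
    have := sinhpA_sinhpS hp hz.le
    rw [← h, sinhpA_zero] at this
    linarith
  · exact h

lemma sinhpS_sinhpA {p x : ℝ} (hp : 0 < p) (hx : 0 ≤ x) : sinhpS p (sinhpA p x) = x := by
  have hA : 0 ≤ sinhpA p x := sinhpA_nonneg hp hx
  exact (sinhpA_strictMonoOn hp).injOn (sinhpS_nonneg hp hA) hx (sinhpA_sinhpS hp hA)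

lemma sinhpS_strictMonoOn {p : ℝ} (hp : 0 < p) : StrictMonoOn (sinhpS p) (Ioi 0) := by
  intro z₁ h1 z₂ h2 hlt
  by_contra hcon
  push_neg at hcon
  have := (sinhpA_strictMonoOn hp).monotoneOn
    (sinhpS_nonneg hp (le_of_lt h2)) (sinhpS_nonneg hp (le_of_lt h1)) hcon
  rw [sinhpA_sinhpS hp (le_of_lt h1), sinhpA_sinhpS hp (le_of_lt h2)] at this
  exact absurd this (not_le.mpr hlt)

lemma sinhpS_contAt {p z : ℝ} (hp : 0 < p) (hz : 0 < z) : ContinuousAt (sinhpS p) z := by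
  apply StrictMonoOn.continuousAt_of_image_mem_nhds (sinhpS_strictMonoOn hp)
    (Ioi_mem_nhds hz)
  have himg : Ioi (0:ℝ) ⊆ sinhpS p '' Ioi 0 := by
    intro x hx
    have hA : 0 < sinhpA p x := by
      have := sinhpA_strictMonoOn hp (self_mem_Ici (a := (0:ℝ)))
        (le_of_lt hx : (0:ℝ) ≤ x) hx
      rwa [sinhpA_zero] at this
    exact ⟨sinhpA p x, hA, sinhpS_sinhpA hp (le_of_lt hx)⟩
  exact Filter.mem_of_superset (isOpen_Ioi.mem_nhds (sinhpS_pos hp hz)) himg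

lemma sinhpS_hasDeriv {p z : ℝ} (hp : 0 < p) (hz : 0 < z) :
    HasDerivAt (sinhpS p) (sinhpC p (sinhpS p z))⁻¹ z := by
  refine HasDerivAt.of_local_left_inverse (sinhpS_contAt hp hz)
    (sinhpA_hasDeriv hp (sinhpS_pos hp hz))
    (sinhpC_pos hp (sinhpS_nonneg hp hz.le)).ne' ?_
  exact Filter.eventually_of_mem (Ioi_mem_nhds hz)
    fun w hw => sinhpA_sinhpS hp (le_of_lt hw)

end SinhpAux

section KeyIneq

lemma key_inv_strict {p q l : ℝ} (hp : 0 < p) (hq : 0 < q) (hpq : p ≠ q) (hl : 0 < l)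
    (hl1 : l < 1) : (l*p + (1-l)*q)⁻¹ < l * p⁻¹ + (1-l) * q⁻¹ := by
  have hr : 0 < l*p + (1-l)*q := by nlinarith
  have hpq2 : 0 < (p - q)^2 :=
    lt_of_le_of_ne (sq_nonneg _) (Ne.symm (pow_ne_zero 2 (sub_ne_zero.mpr hpq)))
  have hll : 0 < l * (1-l) := by nlinarith
  rw [show l * p⁻¹ + (1-l) * q⁻¹ = (l*q + (1-l)*p)/(p*q) by field_simp,
    inv_eq_one_div, div_lt_div_iff₀ hr (by positivity)]
  nlinarith [mul_pos hll hpq2]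

set_option maxHeartbeats 1000000 in
lemma key_log {p q l u w : ℝ} (hp : 0 < p) (hq : 0 < q) (hpq : p ≠ q) (hl : 0 < l)
    (hl1 : l < 1) :
    (l*p + (1-l)*q)⁻¹ * Real.log (1 + Real.exp ((l*p + (1-l)*q) * (l*u + (1-l)*w))) <
      l * (p⁻¹ * Real.log (1 + Real.exp (p*u))) +
        (1-l) * (q⁻¹ * Real.log (1 + Real.exp (q*w))) := by
  set r := l*p + (1-l)*q with hrdef
  have hr : 0 < r := by nlinarith
  set m := l*u + (1-l)*w with hmdef
  set E := Real.exp (r*m) with hEdef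
  have hE0 : 0 < E := Real.exp_pos _
  have hE1 : (0:ℝ) < 1 + E := by linarith
  set α := E / (1+E) with hαdef
  have hα0 : 0 < α := div_pos hE0 hE1
  have hα1 : α < 1 := by rw [hαdef, div_lt_one hE1]; linarith
  set Hm := Real.log (1+E) - α * (r*m) with hHmdef
  have heq : r⁻¹ * Real.log (1+E) = α * m + Hm * r⁻¹ := by
    rw [hHmdef]; field_simp; ring
  have hlogα : Real.log α = r*m - Real.log (1+E) := by
    rw [hαdef, Real.log_div hE0.ne' hE1.ne', hEdef, Real.log_exp]
  have h1α : 1 - α = 1/(1+E) := by rw [hαdef]; field_simp; ring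
  have hlog1α : Real.log (1-α) = -Real.log (1+E) := by
    rw [h1α, Real.log_div one_ne_zero hE1.ne', Real.log_one]; ring
  have hHm_ent : Hm = -(α * Real.log α + (1-α) * Real.log (1-α)) := by
    rw [hlogα, hlog1α, hHmdef]; ring
  have h1α0 : (0:ℝ) < 1 - α := by linarith
  have hHm_pos : 0 < Hm := by
    have l1 : Real.log α < 0 := Real.log_neg hα0 hα1
    have l2 : Real.log (1-α) < 0 := Real.log_neg h1α0 (by linarith)
    have m1 := mul_neg_of_pos_of_neg hα0 l1
    have m2 := mul_neg_of_pos_of_neg h1α0 l2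
    rw [hHm_ent]
    linarith
  have dual : ∀ s x : ℝ, 0 < s → α * x + Hm * s⁻¹ ≤ s⁻¹ * Real.log (1 + Real.exp (s*x)) := by
    intro s x hs
    set v := s*x with hvdef
    have hv : α * v + Hm ≤ Real.log (1 + Real.exp v) := by
      have amgm := Real.geom_mean_le_arith_mean2_weighted hα0.le h1α0.le
        (le_of_lt (div_pos (Real.exp_pos v) hα0))
        (le_of_lt (by positivity : (0:ℝ) < (1-α)⁻¹)) (by ring)
      have hrhs : α * (Real.exp v / α) + (1-α) * (1-α)⁻¹ = Real.exp v + 1 := by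
        field_simp
      rw [hrhs] at amgm
      have hLpos : (0:ℝ) < (Real.exp v / α) ^ α := Real.rpow_pos_of_pos (by positivity) _
      have hRpos : (0:ℝ) < ((1-α)⁻¹ : ℝ) ^ (1-α) := Real.rpow_pos_of_pos (by positivity) _
      have hlog := Real.log_le_log (by positivity) amgm
      rw [Real.log_mul hLpos.ne' hRpos.ne', Real.log_rpow (by positivity),
        Real.log_rpow (by positivity), Real.log_div (Real.exp_pos v).ne' hα0.ne',
        Real.log_exp, Real.log_inv] at hlog
      rw [hHm_ent, show (1:ℝ) + Real.exp v = Real.exp v + 1 by ring]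
      linarith
    have hs' : (0:ℝ) ≤ s⁻¹ := (inv_nonneg).mpr hs.le
    have := mul_le_mul_of_nonneg_left hv hs'
    calc α * x + Hm * s⁻¹ = s⁻¹ * (α * (s*x) + Hm) := by field_simp
      _ ≤ s⁻¹ * Real.log (1 + Real.exp (s*x)) := this
  have hconv := key_inv_strict hp hq hpq hl hl1
  have d1 := dual p u hp
  have d2 := dual q w hq
  calc r⁻¹ * Real.log (1 + E) = α * m + Hm * r⁻¹ := heq
    _ < α * m + Hm * (l * p⁻¹ + (1-l) * q⁻¹) :=
        (add_lt_add_iff_left _).mpr (mul_lt_mul_of_pos_left hconv hHm_pos)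
    _ = l * (α * u + Hm * p⁻¹) + (1-l) * (α * w + Hm * q⁻¹) := by rw [hmdef]; ring
    _ ≤ _ := add_le_add (mul_le_mul_of_nonneg_left d1 hl.le)
        (mul_le_mul_of_nonneg_left d2 (by linarith))

lemma key_rpow {p q l a b : ℝ} (hp : 0 < p) (hq : 0 < q) (hpq : p ≠ q) (hl : 0 < l)
    (hl1 : l < 1) (ha : 0 < a) (hb : 0 < b) :
    (1 + (a ^ l * b ^ (1-l)) ^ (l*p + (1-l)*q)) ^ (l*p + (1-l)*q)⁻¹ <
      (1 + a ^ p) ^ (l * p⁻¹) * (1 + b ^ q) ^ ((1-l) * q⁻¹) := by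
  set r := l*p + (1-l)*q with hrdef
  have hr : 0 < r := by nlinarith
  set u := Real.log a with hudef
  set w := Real.log b with hwdef
  have hab : a ^ l * b ^ (1-l) = Real.exp (l*u + (1-l)*w) := by
    rw [Real.rpow_def_of_pos ha, Real.rpow_def_of_pos hb, ← Real.exp_add]
    congr 1; rw [hudef, hwdef]; ring
  have hCr : (a ^ l * b ^ (1-l)) ^ r = Real.exp (r * (l*u + (1-l)*w)) := by
    rw [hab, Real.rpow_def_of_pos (Real.exp_pos _), Real.log_exp]; ring_nf
  have hap : a ^ p = Real.exp (p * u) := by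
    rw [Real.rpow_def_of_pos ha, hudef]; ring_nf
  have hbq : b ^ q = Real.exp (q * w) := by
    rw [Real.rpow_def_of_pos hb, hwdef]; ring_nf
  have hL : (0:ℝ) < 1 + (a ^ l * b ^ (1-l)) ^ r := by
    have := Real.rpow_nonneg (by positivity : (0:ℝ) ≤ a ^ l * b ^ (1-l)) r
    linarith
  have hR1 : (0:ℝ) < 1 + a ^ p := by have := Real.rpow_nonneg ha.le p; linarith
  have hR2 : (0:ℝ) < 1 + b ^ q := by have := Real.rpow_nonneg hb.le q; linarith
  have hklog := key_log (u := u) (w := w) hp hq hpq hl hl1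
  rw [← Real.log_lt_log_iff (Real.rpow_pos_of_pos hL _)
    (mul_pos (Real.rpow_pos_of_pos hR1 _) (Real.rpow_pos_of_pos hR2 _)),
    Real.log_rpow hL, Real.log_mul (Real.rpow_pos_of_pos hR1 _).ne'
      (Real.rpow_pos_of_pos hR2 _).ne', Real.log_rpow hR1, Real.log_rpow hR2,
    hCr, hap, hbq]
  calc r⁻¹ * Real.log (1 + Real.exp (r * (l*u + (1-l)*w)))
      < l * (p⁻¹ * Real.log (1 + Real.exp (p*u))) +
          (1-l) * (q⁻¹ * Real.log (1 + Real.exp (q*w))) := hklog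
    _ = l * p⁻¹ * Real.log (1 + Real.exp (p*u)) +
          (1-l) * q⁻¹ * Real.log (1 + Real.exp (q*w)) := by ring

end KeyIneq

section Core

set_option maxHeartbeats 1000000 in
lemma sinhp_core {p q l y : ℝ} (hp : 0 < p) (hq : 0 < q) (hpq : p ≠ q) (hl : 0 < l)
    (hl1 : l < 1) (hy : 0 < y) :
    sinhpS (l*p + (1-l)*q) y < sinhpS p y ^ l * sinhpS q y ^ (1-l) := by
  set r := l*p + (1-l)*q with hrdef
  have hr : 0 < r := by nlinarith
  set C : ℝ → ℝ := fun z => sinhpS p z ^ l * sinhpS q z ^ (1-l) with hCdef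
  set D : ℝ → ℝ := fun z => sinhpA r (C z) - z with hDdef
  have hCpos : ∀ z : ℝ, 0 < z → 0 < C z := fun z hz =>
    mul_pos (Real.rpow_pos_of_pos (sinhpS_pos hp hz) l)
      (Real.rpow_pos_of_pos (sinhpS_pos hq hz) (1-l))
  have hderiv : ∀ z ∈ Ioi (0:ℝ), ∃ d, HasDerivAt D d z ∧ 0 < d := by
    intro z hz
    rw [mem_Ioi] at hz
    set a := sinhpS p z with hadef
    set b := sinhpS q z with hbdef
    have ha : 0 < a := sinhpS_pos hp hz
    have hb : 0 < b := sinhpS_pos hq hz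
    set A' := (sinhpC p a)⁻¹ with hA'def
    set B' := (sinhpC q b)⁻¹ with hB'def
    have hA'pos : 0 < A' := inv_pos.mpr (sinhpC_pos hp ha.le)
    have hB'pos : 0 < B' := inv_pos.mpr (sinhpC_pos hq hb.le)
    have hSa : HasDerivAt (sinhpS p) A' z := sinhpS_hasDeriv hp hz
    have hSb : HasDerivAt (sinhpS q) B' z := sinhpS_hasDeriv hq hz
    have h1 : HasDerivAt (fun z => sinhpS p z ^ l) (A' * l * a ^ (l-1)) z :=
      hSa.rpow_const (Or.inl ha.ne')
    have h2 : HasDerivAt (fun z => sinhpS q z ^ (1-l)) (B' * (1-l) * b ^ (1-l-1)) z :=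
      hSb.rpow_const (Or.inl hb.ne')
    set Cd := A' * l * a ^ (l-1) * b ^ (1-l) + a ^ l * (B' * (1-l) * b ^ (1-l-1)) with hCddef
    have hCd : HasDerivAt C Cd z := h1.mul h2
    have hApd : HasDerivAt (sinhpA r) (sinhpC r (C z)) (C z) :=
      sinhpA_hasDeriv hr (hCpos z hz)
    have hPhi : HasDerivAt (fun z => sinhpA r (C z)) (sinhpC r (C z) * Cd) z :=
      hApd.comp z hCd
    have hDd : HasDerivAt D (sinhpC r (C z) * Cd - 1) z := hPhi.sub (hasDerivAt_id z)
    refine ⟨_, hDd, ?_⟩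
    -- positivity of the derivative
    have hCz : C z = a ^ l * b ^ (1-l) := rfl
    have hCzpos : 0 < C z := hCpos z hz
    -- rewrite Cd
    have hCd_eq : Cd = C z * (l * (A'/a) + (1-l) * (B'/b)) := by
      rw [hCddef, hCz, Real.rpow_sub_one ha.ne' l,
        show (1 - l - 1 : ℝ) = (1-l) - 1 by ring, Real.rpow_sub_one hb.ne' (1-l)]
      field_simp
    -- AM-GM
    have hgm : (A'/a) ^ l * (B'/b) ^ (1-l) ≤ l * (A'/a) + (1-l) * (B'/b) :=
      Real.geom_mean_le_arith_mean2_weighted hl.le (by linarith)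
        (by positivity) (by positivity) (by ring)
    have hgm_eq : (A'/a) ^ l * (B'/b) ^ (1-l) = (A' ^ l * B' ^ (1-l)) / C z := by
      rw [Real.div_rpow hA'pos.le ha.le, Real.div_rpow hB'pos.le hb.le, hCz]
      field_simp
    -- A'^l * B'^(1-l) in rpow form
    have hA'eq : A' = (1 + a ^ p) ^ p⁻¹ := by
      rw [hA'def, sinhpC, one_div, Real.rpow_neg (by positivity), inv_inv]
    have hB'eq : B' = (1 + b ^ q) ^ q⁻¹ := by
      rw [hB'def, sinhpC, one_div, Real.rpow_neg (by positivity), inv_inv]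
    have hprod : A' ^ l * B' ^ (1-l) = (1 + a ^ p) ^ (l * p⁻¹) * (1 + b ^ q) ^ ((1-l) * q⁻¹) := by
      rw [hA'eq, hB'eq, ← Real.rpow_mul (by positivity), ← Real.rpow_mul (by positivity)]
      ring_nf
    -- key inequality
    have hkey : (1 + (C z) ^ r) ^ r⁻¹ < A' ^ l * B' ^ (1-l) := by
      rw [hprod, hCz]
      exact key_rpow hp hq hpq hl hl1 ha hb
    have hbase : (0:ℝ) < 1 + (C z) ^ r := by
      have := Real.rpow_nonneg hCzpos.le r
      linarith
    set K := (1 + (C z) ^ r) ^ r⁻¹ with hKdef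
    have hKpos : 0 < K := Real.rpow_pos_of_pos hbase _
    have hcr : sinhpC r (C z) = K⁻¹ := by
      rw [sinhpC, one_div, Real.rpow_neg hbase.le, ← hKdef]
    -- combine: Cd > K
    have hCdK : K < Cd := by
      have step1 : A' ^ l * B' ^ (1-l) = C z * ((A'/a) ^ l * (B'/b) ^ (1-l)) := by
        rw [hgm_eq]
        field_simp
      have step2 : C z * ((A'/a) ^ l * (B'/b) ^ (1-l)) ≤ C z * (l * (A'/a) + (1-l) * (B'/b)) :=
        mul_le_mul_of_nonneg_left hgm hCzpos.le
      rw [hCd_eq]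
      calc K < A' ^ l * B' ^ (1-l) := hkey
        _ = C z * ((A'/a) ^ l * (B'/b) ^ (1-l)) := step1
        _ ≤ _ := step2
    have : 1 < sinhpC r (C z) * Cd := by
      rw [hcr, inv_mul_eq_div, lt_div_iff₀ hKpos, one_mul]
      exact hCdK
    linarith
  have hcont : ContinuousOn D (Ioi 0) := fun z hz =>
    ((hderiv z hz).choose_spec.1.continuousAt).continuousWithinAt
  have hmono : StrictMonoOn D (Ioi 0) := by
    apply strictMonoOn_of_deriv_pos (convex_Ioi 0) hcont
    intro z hz
    rw [interior_Ioi] at hz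
    obtain ⟨d, hd, hdpos⟩ := hderiv z hz
    rwa [hd.deriv]
  have hDlow : ∀ z : ℝ, 0 < z → -z ≤ D z := by
    intro z hz
    have h0 : 0 ≤ sinhpA r (C z) := sinhpA_nonneg hr (hCpos z hz).le
    have : D z = sinhpA r (C z) - z := rfl
    linarith
  have hy2 : (0:ℝ) < y/2 := by linarith
  have hmid : 0 ≤ D (y/2) := by
    by_contra hneg
    push_neg at hneg
    clear_value D
    obtain ⟨z, hzdef⟩ : ∃ z : ℝ, z = min (y/4) (-(D (y/2))/2) := ⟨_, rfl⟩
    have hz0 : 0 < z := by rw [hzdef]; exact lt_min (by linarith) (by linarith)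
    have hzlt : z < y/2 := by
      rw [hzdef]; exact lt_of_le_of_lt (min_le_left _ _) (by linarith)
    have h1 : D z < D (y/2) := hmono (mem_Ioi.mpr hz0) (mem_Ioi.mpr hy2) hzlt
    have h2 : -z ≤ D z := hDlow z hz0
    have h3 : z ≤ -(D (y/2))/2 := by rw [hzdef]; exact min_le_right _ _
    linarith
  have hfin : 0 < D y := lt_of_le_of_lt hmid
    (hmono (mem_Ioi.mpr hy2) (mem_Ioi.mpr hy) (by linarith))
  have hAlt : sinhpA r (sinhpS r y) < sinhpA r (C y) := by
    rw [sinhpA_sinhpS hr hy.le]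
    have : D y = sinhpA r (C y) - y := rfl
    linarith
  by_contra hcon
  push_neg at hcon
  have hCy : C y = sinhpS p y ^ l * sinhpS q y ^ (1-l) := rfl
  rw [← hCy] at hcon
  have := (sinhpA_strictMonoOn hr).monotoneOn (hCpos y hy).le
    (sinhpS_nonneg hr hy.le) hcon
  linarith

end Core

/-- For fixed `y > 0`, `p ↦ sinh_p y` is strictly log-convex on `(0,∞)`; in
particular `(sinh_p y)² < sinh_{p-1} y · sinh_{p+1} y` for `p > 1`. -/
theorem sinhp_log_convex (sinhp : ℝ → ℝ → ℝ)
    (hinv : ∀ p : ℝ, 0 < p → ∀ x : ℝ, 0 ≤ x →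
      sinhp p (∫ t in (0:ℝ)..x, (1 + t ^ p) ^ (-(1 / p))) = x)
    (y : ℝ) (hy : 0 < y) :
    StrictConvexOn ℝ (Set.Ioi (0:ℝ)) (fun p => Real.log (sinhp p y)) ∧
    ∀ p : ℝ, 1 < p → (sinhp p y) ^ 2 < sinhp (p - 1) y * sinhp (p + 1) y := by
  have hval : ∀ p : ℝ, 0 < p → sinhp p y = sinhpS p y := by
    intro p hp
    have h := hinv p hp (sinhpS p y) (sinhpS_nonneg hp hy.le)
    have hA : (∫ t in (0:ℝ)..(sinhpS p y), (1 + t ^ p) ^ (-(1 / p))) = y := by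
      have := sinhpA_sinhpS hp hy.le
      simpa [sinhpA, sinhpC] using this
    rw [hA] at h
    exact h
  have hconv : StrictConvexOn ℝ (Set.Ioi (0:ℝ)) (fun p => Real.log (sinhp p y)) := by
    refine ⟨convex_Ioi 0, ?_⟩
    intro P hP Q hQ hPQ aa bb haa hbb hab
    rw [mem_Ioi] at hP hQ
    have hbb' : bb = 1 - aa := by linarith
    subst hbb'
    have haa1 : aa < 1 := by linarith
    have hr : 0 < aa * P + (1 - aa) * Q := by nlinarith
    simp only [smul_eq_mul]
    rw [hval P hP, hval Q hQ, hval _ hr]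
    have hSP := sinhpS_pos hP hy
    have hSQ := sinhpS_pos hQ hy
    have hcore := sinhp_core hP hQ hPQ haa haa1 hy
    calc Real.log (sinhpS (aa*P + (1-aa)*Q) y)
        < Real.log (sinhpS P y ^ aa * sinhpS Q y ^ (1-aa)) :=
          Real.log_lt_log (sinhpS_pos hr hy) hcore
      _ = aa * Real.log (sinhpS P y) + (1-aa) * Real.log (sinhpS Q y) := by
          rw [Real.log_mul (Real.rpow_pos_of_pos hSP aa).ne'
            (Real.rpow_pos_of_pos hSQ (1-aa)).ne', Real.log_rpow hSP, Real.log_rpow hSQ]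
  refine ⟨hconv, ?_⟩
  intro p hp1
  have hm : p - 1 ∈ Ioi (0:ℝ) := by rw [mem_Ioi]; linarith
  have hpl : p + 1 ∈ Ioi (0:ℝ) := by rw [mem_Ioi]; linarith
  have hne : p - 1 ≠ p + 1 := by intro h; linarith
  have h2 := hconv.2 hm hpl hne (by norm_num : (0:ℝ) < 1/2)
    (by norm_num : (0:ℝ) < 1/2) (by norm_num)
  simp only [smul_eq_mul] at h2
  rw [show (1/2 : ℝ) * (p-1) + (1/2) * (p+1) = p by ring] at h2
  have hp0 : (0:ℝ) < p := by linarith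
  have s0 : 0 < sinhp p y := by rw [hval p hp0]; exact sinhpS_pos hp0 hy
  have sm : 0 < sinhp (p-1) y := by
    rw [hval _ (by linarith : (0:ℝ) < p - 1)]; exact sinhpS_pos (by linarith) hy
  have sp : 0 < sinhp (p+1) y := by
    rw [hval _ (by linarith : (0:ℝ) < p + 1)]; exact sinhpS_pos (by linarith) hy
  have hlog : Real.log ((sinhp p y) ^ 2) < Real.log (sinhp (p-1) y * sinhp (p+1) y) := by
    rw [Real.log_pow, Real.log_mul sm.ne' sp.ne']
    push_cast
    linarith
  exact (Real.log_lt_log_iff (pow_pos s0 2) (mul_pos sm sp)).mp hlog
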